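/- Let G be a randomly 3-dimensional graph. Then G is isomorphic to the complete graph K_4. -/

import Mathlib

open Finset SimpleGraph

set_option linter.unusedSectionVars false
set_option linter.unusedVariables false
set_option maxHeartbeats 1000000

/-- `S` is a resolving set of `G`: every pair of distinct vertices is resolved
by some vertex of `S`, i.e. some `u ∈ S` has different distances to the two vertices. -/
def IsResolvingSet {V : Type*} (G : SimpleGraph V) (S : Set V) : Prop :=
  ∀ x y : V, x ≠ y → ∃ u ∈ S, G.dist u x ≠ G.dist u y

/-- The metric dimension of `G`: minimum size of a resolving set. -/
noncomputable def metricDim {V : Type*} [Fintype V] (G : SimpleGraph V) : ℕ :=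
  sInf {k | ∃ S : Finset V, S.card = k ∧ IsResolvingSet G ↑S}

/-- The upper dimension of `G`: maximum size of a minimal resolving set. -/
noncomputable def upperDim {V : Type*} [Fintype V] (G : SimpleGraph V) : ℕ :=
  sSup {k | ∃ S : Finset V, S.card = k ∧ IsResolvingSet G ↑S ∧
    ∀ T : Finset V, T ⊂ S → ¬ IsResolvingSet G ↑T}

/-- The resolving number of `G`: minimum `k` such that every `k`-subset of
the vertex set is a resolving set. -/
noncomputable def resolvingNumber {V : Type*} [Fintype V] (G : SimpleGraph V) : ℕ :=
  sInf {k | ∀ S : Finset V, S.card = k → IsResolvingSet G ↑S}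

namespace K4

variable {V : Type*} [Fintype V] [DecidableEq V] {G : SimpleGraph V}

/-- first step along a shortest walk -/
lemma first_step (hc : G.Connected) {z u : V} (h : 0 < G.dist z u) :
    ∃ p, G.Adj z p ∧ G.dist p u + 1 = G.dist z u := by
  obtain ⟨w, hw⟩ := hc.exists_walk_length_eq_dist z u
  cases w with
  | nil => simp at hw; rw [SimpleGraph.dist_self] at h; omega
  | cons hadj q =>
    rename_i p
    refine ⟨p, hadj, ?_⟩
    have h1 : G.dist p u ≤ q.length := SimpleGraph.dist_le q
    have h2 : G.dist z p ≤ 1 := by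
      simpa using SimpleGraph.dist_le (SimpleGraph.Walk.cons hadj SimpleGraph.Walk.nil)
    have h3 : G.dist z u ≤ G.dist z p + G.dist p u := hc.dist_triangle
    simp only [SimpleGraph.Walk.length_cons] at hw
    omega

/-- a neighbor one step closer, from the far end -/
lemma pred_step (hc : G.Connected) {z u : V} (h : 0 < G.dist z u) :
    ∃ p, G.Adj u p ∧ G.dist z p + 1 = G.dist z u := by
  rw [SimpleGraph.dist_comm] at h ⊢
  obtain ⟨p, hp, hd⟩ := first_step hc h
  exact ⟨p, hp, by rwa [SimpleGraph.dist_comm]⟩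

/-- levels are nonempty up to the distance of any witness -/
lemma level_nonempty (hc : G.Connected) {z x : V} {j : ℕ} (hj : j ≤ G.dist z x) :
    ∃ u, G.dist z u = j ∧ G.dist u x + j = G.dist z x := by
  induction j with
  | zero => exact ⟨z, by simp, by simp⟩
  | succ j ih =>
    obtain ⟨u, hu1, hu2⟩ := ih (by omega)
    have hpos : 0 < G.dist u x := by omega
    obtain ⟨p, hp, hd⟩ := first_step hc hpos
    refine ⟨p, ?_, ?_⟩
    · have h1 : G.dist z p ≤ G.dist z u + G.dist u p := hc.dist_triangle
      have h2 : G.dist u p ≤ 1 := by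
        simpa using SimpleGraph.dist_le (SimpleGraph.Walk.cons hp SimpleGraph.Walk.nil)
      have h3 : G.dist z x ≤ G.dist z p + G.dist p x := hc.dist_triangle
      omega
    · have h3 : G.dist z x ≤ G.dist z p + G.dist p x := hc.dist_triangle
      have h1 : G.dist z p ≤ G.dist z u + G.dist u p := hc.dist_triangle
      have h2 : G.dist u p ≤ 1 := by
        simpa using SimpleGraph.dist_le (SimpleGraph.Walk.cons hp SimpleGraph.Walk.nil)
      omega

/-- discrete intermediate value property along a walk -/
lemma ivt_walk (hc : G.Connected) {z : V} {r : ℕ} {a b : V} (p : G.Walk a b) :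
    G.dist z a ≤ r → r ≤ G.dist z b → ∃ c ∈ p.support, G.dist z c = r := by
  induction p with
  | nil =>
    rename_i u
    exact fun ha hb => ⟨u, by simp, by omega⟩
  | cons hadj q ih =>
    rename_i u v w
    intro ha hb
    by_cases h : G.dist z u = r
    · exact ⟨u, by simp, h⟩
    · have h1 : G.dist z v ≤ G.dist z u + G.dist u v := hc.dist_triangle
      have h2 : G.dist u v ≤ 1 := by
        simpa using SimpleGraph.dist_le (SimpleGraph.Walk.cons hadj SimpleGraph.Walk.nil)
      obtain ⟨c, hcs, hcd⟩ := ih (by omega) hb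
      exact ⟨c, by simp [hcs], hcd⟩

/-- additivity of distance through an unavoidable vertex -/
lemma cut_add (hc : G.Connected) {w u c : V} (hcut : ∀ p : G.Walk w u, c ∈ p.support) :
    G.dist w u = G.dist w c + G.dist c u := by
  have hle : G.dist w u ≤ G.dist w c + G.dist c u := hc.dist_triangle
  obtain ⟨p, hp⟩ := hc.exists_walk_length_eq_dist w u
  have hmem := hcut p
  have hsplit := congrArg SimpleGraph.Walk.length (p.take_spec hmem)
  rw [SimpleGraph.Walk.length_append] at hsplit
  have h1 : G.dist w c ≤ (p.takeUntil c hmem).length := SimpleGraph.dist_le _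
  have h2 : G.dist c u ≤ (p.dropUntil c hmem).length := SimpleGraph.dist_le _
  omega


noncomputable def Npair (G : SimpleGraph V) [DecidableEq V] (p : Finset V) : Finset V :=
  univ.filter (fun u => ∀ x ∈ p, ∀ y ∈ p, G.dist u x = G.dist u y)

lemma mem_Npair_pair {x y u : V} :
    u ∈ Npair G {x, y} ↔ G.dist u x = G.dist u y := by
  simp only [Npair, mem_filter, mem_univ, true_and, mem_insert, mem_singleton]
  constructor
  · intro h; exact h x (Or.inl rfl) y (Or.inr rfl)
  · rintro h a (rfl | rfl) b (rfl | rfl) <;> first | rfl | exact h | exact h.symm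

lemma Ncard_le (hN3 : ∀ S : Finset V, S.card = 3 → IsResolvingSet G ↑S)
    {p : Finset V} (hp : p.card = 2) : (Npair G p).card ≤ 2 := by
  by_contra h
  push_neg at h
  obtain ⟨T, hT, hTcard⟩ := Finset.exists_subset_card_eq h
  obtain ⟨x, y, hxy, rfl⟩ := Finset.card_eq_two.mp hp
  obtain ⟨u, hu, hne⟩ := hN3 T hTcard x y hxy
  exact hne (mem_Npair_pair.mp (hT hu))

lemma Nsurj (hN3 : ∀ S : Finset V, S.card = 3 → IsResolvingSet G ↑S)
    (hN2 : ∀ S : Finset V, S.card = 2 → ¬ IsResolvingSet G ↑S)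
    {q : Finset V} (hq : q.card = 2) : ∃ p : Finset V, p.card = 2 ∧ Npair G p = q := by
  have h := hN2 q hq
  rw [IsResolvingSet] at h
  push_neg at h
  obtain ⟨x, y, hxy, hall⟩ := h
  refine ⟨{x, y}, Finset.card_pair hxy, ?_⟩
  have hsub : q ⊆ Npair G {x, y} := fun u hu => mem_Npair_pair.mpr (hall u hu)
  exact (Finset.eq_of_subset_of_card_le hsub
    (by rw [hq]; exact Ncard_le hN3 (Finset.card_pair hxy))).symm

lemma Nbij (hN3 : ∀ S : Finset V, S.card = 3 → IsResolvingSet G ↑S)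
    (hN2 : ∀ S : Finset V, S.card = 2 → ¬ IsResolvingSet G ↑S) :
    (∀ p : Finset V, p.card = 2 → (Npair G p).card = 2) ∧
    (∀ p q : Finset V, p.card = 2 → q.card = 2 → Npair G p = Npair G q → p = q) := by
  classical
  set s : Finset (Finset V) := univ.powersetCard 2 with hs
  have hmem : ∀ p : Finset V, p ∈ s ↔ p.card = 2 := by
    intro p
    simp [hs, Finset.mem_powersetCard, Finset.subset_univ]
  have hsub : s ⊆ s.image (Npair G) := by
    intro q hq
    obtain ⟨p, hp2, hpq⟩ := Nsurj hN3 hN2 ((hmem q).mp hq)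
    exact Finset.mem_image.mpr ⟨p, (hmem p).mpr hp2, hpq⟩
  have heq : s.image (Npair G) = s :=
    (Finset.eq_of_subset_of_card_le hsub Finset.card_image_le).symm
  have hinj : Set.InjOn (Npair G) ↑s := Finset.injOn_of_card_image_eq (by rw [heq])
  constructor
  · intro p hp
    have : Npair G p ∈ s := heq ▸ Finset.mem_image_of_mem _ ((hmem p).mpr hp)
    exact (hmem _).mp this
  · intro p q hp hq h
    exact hinj (Finset.mem_coe.mpr ((hmem p).mpr hp)) (Finset.mem_coe.mpr ((hmem q).mpr hq)) h

/-- The key uniqueness: two pairs simultaneously unresolved by two vertices coincide. -/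
lemma eq_pair_of_two_eqd
    (hcard2 : ∀ p : Finset V, p.card = 2 → (Npair G p).card = 2)
    (hinj2 : ∀ p q : Finset V, p.card = 2 → q.card = 2 → Npair G p = Npair G q → p = q)
    {a b u1 v1 u2 v2 : V} (hab : a ≠ b) (h1 : u1 ≠ v1) (h2 : u2 ≠ v2)
    (e1a : G.dist a u1 = G.dist a v1) (e1b : G.dist b u1 = G.dist b v1)
    (e2a : G.dist a u2 = G.dist a v2) (e2b : G.dist b u2 = G.dist b v2) :
    ({u1, v1} : Finset V) = {u2, v2} := by
  have hNab : ∀ u v : V, u ≠ v → G.dist a u = G.dist a v → G.dist b u = G.dist b v →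
      Npair G {u, v} = {a, b} := by
    intro u v huv hda hdb
    have hsub : ({a, b} : Finset V) ⊆ Npair G {u, v} := by
      intro w hw
      rcases Finset.mem_insert.mp hw with rfl | hw
      · exact mem_Npair_pair.mpr hda
      · rw [Finset.mem_singleton] at hw; subst hw; exact mem_Npair_pair.mpr hdb
    exact (Finset.eq_of_subset_of_card_le hsub
      (by rw [hcard2 _ (Finset.card_pair huv), Finset.card_pair hab])).symm
  exact hinj2 _ _ (Finset.card_pair h1) (Finset.card_pair h2)
    ((hNab u1 v1 h1 e1a e1b).trans (hNab u2 v2 h2 e2a e2b).symm)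

lemma count_w (hc : G.Connected)
    (hN3 : ∀ S : Finset V, S.card = 3 → IsResolvingSet G ↑S)
    (hN2 : ∀ S : Finset V, S.card = 2 → ¬ IsResolvingSet G ↑S) (w : V) :
    (((univ : Finset V).powersetCard 2).filter (fun p => w ∈ Npair G p)).card
      = Fintype.card V - 1 := by
  classical
  set s : Finset (Finset V) := univ.powersetCard 2 with hs
  have hmem : ∀ p : Finset V, p ∈ s ↔ p.card = 2 := by
    intro p; simp [hs, Finset.mem_powersetCard, Finset.subset_univ]
  obtain ⟨hcard2, hinj2⟩ := Nbij hN3 hN2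
  have hbij : (s.filter (fun p => w ∈ Npair G p)).card
      = (s.filter (fun q => w ∈ q)).card := by
    apply Finset.card_bij (fun p _ => Npair G p)
    · intro p hp
      simp only [Finset.mem_filter] at hp ⊢
      exact ⟨(hmem _).mpr (hcard2 p ((hmem p).mp hp.1)), hp.2⟩
    · intro p hp q hq h
      simp only [Finset.mem_filter] at hp hq
      exact hinj2 p q ((hmem p).mp hp.1) ((hmem q).mp hq.1) h
    · intro q hq
      simp only [Finset.mem_filter] at hq
      obtain ⟨p, hp2, hpq⟩ := Nsurj hN3 hN2 ((hmem q).mp hq.1)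
      exact ⟨p, Finset.mem_filter.mpr ⟨(hmem p).mpr hp2, by rw [hpq]; exact hq.2⟩, hpq⟩
  rw [hbij]
  have himg : s.filter (fun q => w ∈ q)
      = (univ.erase w).image (fun u => ({w, u} : Finset V)) := by
    ext q
    constructor
    · intro hq
      obtain ⟨hq1, hwq⟩ := Finset.mem_filter.mp hq
      obtain ⟨x, y, hxy, rfl⟩ := Finset.card_eq_two.mp ((hmem _).mp hq1)
      rcases Finset.mem_insert.mp hwq with rfl | h
      · exact Finset.mem_image.mpr
          ⟨y, Finset.mem_erase.mpr ⟨fun h => hxy h.symm, Finset.mem_univ y⟩, rfl⟩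
      · rw [Finset.mem_singleton] at h; subst h
        exact Finset.mem_image.mpr
          ⟨x, Finset.mem_erase.mpr ⟨hxy, Finset.mem_univ x⟩, Finset.pair_comm w x⟩
    · intro hq
      obtain ⟨u, hu, rfl⟩ := Finset.mem_image.mp hq
      have hune : u ≠ w := (Finset.mem_erase.mp hu).1
      exact Finset.mem_filter.mpr
        ⟨(hmem _).mpr (Finset.card_pair fun h => hune h.symm), Finset.mem_insert_self w _⟩
  rw [himg, Finset.card_image_of_injOn, Finset.card_erase_of_mem (Finset.mem_univ w),
    Finset.card_univ]
  intro u hu u' hu' h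
  simp only [Finset.mem_coe, Finset.mem_erase] at hu hu'
  have h' : ({w, u} : Finset V) = {w, u'} := h
  have hmem2 : u ∈ ({w, u'} : Finset V) := by
    rw [← h']; exact Finset.mem_insert_of_mem (Finset.mem_singleton_self u)
  rcases Finset.mem_insert.mp hmem2 with rfl | h2
  · exact absurd rfl hu.1
  · exact Finset.mem_singleton.mp h2


noncomputable def lvl (G : SimpleGraph V) [Fintype V] [DecidableEq V] (w : V) (j : ℕ) : Finset V :=
  univ.filter (fun u => G.dist w u = j)

lemma mem_lvl {w u : V} {j : ℕ} : u ∈ lvl G w j ↔ G.dist w u = j := by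
  simp [lvl]

lemma sum_m (hc : G.Connected) {D : ℕ} (hmax : ∀ u v : V, G.dist u v ≤ D) (w : V) :
    ∑ j ∈ Icc 1 D, (lvl G w j).card = Fintype.card V - 1 := by
  have hfib := Finset.card_eq_sum_card_fiberwise
    (f := fun u => G.dist w u) (s := univ.erase w) (t := Icc 1 D) ?_
  · rw [Finset.card_erase_of_mem (Finset.mem_univ w), Finset.card_univ] at hfib
    rw [hfib]
    refine Finset.sum_congr rfl fun j hj => ?_
    symm
    congr 1
    ext u
    rw [Finset.mem_filter, Finset.mem_erase, mem_lvl]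
    rw [Finset.mem_Icc] at hj
    constructor
    · rintro ⟨⟨hne, _⟩, h⟩; exact h
    · intro h
      refine ⟨⟨fun he => ?_, Finset.mem_univ u⟩, h⟩
      subst he; rw [SimpleGraph.dist_self] at h; omega
  · intro u hu
    have hne : u ≠ w := (Finset.mem_erase.mp hu).1
    have : 0 < G.dist w u := hc.pos_dist_of_ne (fun h => hne h.symm)
    exact Finset.mem_Icc.mpr ⟨this, hmax w u⟩

/-- pigeonhole: one collision -/
lemma pigeon1 {S : Finset V} {f : V → ℕ} {T : Finset ℕ}
    (hm : ∀ a ∈ S, f a ∈ T) (h : T.card < S.card) :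
    ∃ u ∈ S, ∃ v ∈ S, u ≠ v ∧ f u = f v := by
  obtain ⟨u, hu, v, hv, hne, he⟩ := Finset.exists_ne_map_eq_of_card_lt_of_maps_to h hm
  exact ⟨u, hu, v, hv, hne, he⟩

/-- pigeonhole: two essentially different collisions -/
lemma pigeon2 {S : Finset V} {f : V → ℕ} {T : Finset ℕ}
    (hm : ∀ a ∈ S, f a ∈ T) (h : T.card + 2 ≤ S.card) :
    ∃ u1 ∈ S, ∃ v1 ∈ S, ∃ u2 ∈ S, ∃ v2 ∈ S,
      u1 ≠ v1 ∧ u2 ≠ v2 ∧ f u1 = f v1 ∧ f u2 = f v2 ∧ u1 ≠ u2 ∧ u1 ≠ v2 := by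
  obtain ⟨u1, hu1, v1, hv1, hne1, he1⟩ := pigeon1 hm (by omega)
  have hm' : ∀ a ∈ S.erase u1, f a ∈ T := fun a ha => hm a (Finset.mem_of_mem_erase ha)
  have hcard : T.card < (S.erase u1).card := by
    rw [Finset.card_erase_of_mem hu1]; omega
  obtain ⟨u2, hu2, v2, hv2, hne2, he2⟩ := pigeon1 hm' hcard
  exact ⟨u1, hu1, v1, hv1, u2, Finset.mem_of_mem_erase hu2, v2, Finset.mem_of_mem_erase hv2,
    hne1, hne2, he1, he2, fun h => (Finset.mem_erase.mp hu2).1 h.symm,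
    fun h => (Finset.mem_erase.mp hv2).1 h.symm⟩

lemma card3 (a b c : ℕ) : ({a, b, c} : Finset ℕ).card ≤ 3 := by
  apply le_trans (Finset.card_insert_le _ _)
  have := Finset.card_insert_le b ({c} : Finset ℕ)
  simp at this ⊢
  omega

lemma card2 (a b : ℕ) : ({a, b} : Finset ℕ).card ≤ 2 := by
  apply le_trans (Finset.card_insert_le _ _)
  simp


lemma sum_choose (hc : G.Connected)
    (hN3 : ∀ S : Finset V, S.card = 3 → IsResolvingSet G ↑S)
    (hN2 : ∀ S : Finset V, S.card = 2 → ¬ IsResolvingSet G ↑S)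
    {D : ℕ} (hmax : ∀ u v : V, G.dist u v ≤ D) (w : V) :
    ∑ j ∈ Icc 1 D, ((lvl G w j).card).choose 2 = Fintype.card V - 1 := by
  classical
  rw [← count_w hc hN3 hN2 w]
  have hsplit : ((univ : Finset V).powersetCard 2).filter (fun p => w ∈ Npair G p)
      = (Icc 1 D).biUnion (fun j => (lvl G w j).powersetCard 2) := by
    ext q
    constructor
    · intro hq
      obtain ⟨hq1, hwq⟩ := Finset.mem_filter.mp hq
      have hq2 : q.card = 2 := (Finset.mem_powersetCard.mp hq1).2
      obtain ⟨x, y, hxy, rfl⟩ := Finset.card_eq_two.mp hq2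
      have hd : G.dist w x = G.dist w y := mem_Npair_pair.mp hwq
      have hxw : x ≠ w := by
        rintro rfl
        rw [SimpleGraph.dist_self] at hd
        have := hc.pos_dist_of_ne hxy
        omega
      have hpos : 0 < G.dist w x := hc.pos_dist_of_ne (fun h => hxw h.symm)
      refine Finset.mem_biUnion.mpr ⟨G.dist w x, Finset.mem_Icc.mpr ⟨hpos, hmax w x⟩, ?_⟩
      refine Finset.mem_powersetCard.mpr ⟨?_, Finset.card_pair hxy⟩
      intro u hu
      rcases Finset.mem_insert.mp hu with rfl | hu
      · exact mem_lvl.mpr rfl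
      · rw [Finset.mem_singleton] at hu; subst hu
        exact mem_lvl.mpr hd.symm
    · intro hq
      obtain ⟨j, hj, hq⟩ := Finset.mem_biUnion.mp hq
      obtain ⟨hsub, hcard⟩ := Finset.mem_powersetCard.mp hq
      refine Finset.mem_filter.mpr
        ⟨Finset.mem_powersetCard.mpr ⟨Finset.subset_univ q, hcard⟩, ?_⟩
      obtain ⟨x, y, hxy, rfl⟩ := Finset.card_eq_two.mp hcard
      have hx := mem_lvl.mp (hsub (Finset.mem_insert_self x {y}))
      have hy := mem_lvl.mp (hsub (Finset.mem_insert_of_mem (Finset.mem_singleton_self y)))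
      exact mem_Npair_pair.mpr (hx.trans hy.symm)
  rw [hsplit, Finset.card_biUnion]
  · exact Finset.sum_congr rfl fun j _ => (Finset.card_powersetCard 2 _).symm
  · intro j hj j' hj' hne
    simp only [Finset.disjoint_left]
    intro q hq hq'
    obtain ⟨hsub, hcard⟩ := Finset.mem_powersetCard.mp hq
    obtain ⟨hsub', _⟩ := Finset.mem_powersetCard.mp hq'
    obtain ⟨x, y, hxy, rfl⟩ := Finset.card_eq_two.mp hcard
    have h1 := mem_lvl.mp (hsub (Finset.mem_insert_self x {y}))
    have h2 := mem_lvl.mp (hsub' (Finset.mem_insert_self x {y}))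
    exact hne (by omega)

lemma two_neighbors (hc : G.Connected)
    (hcard2 : ∀ p : Finset V, p.card = 2 → (Npair G p).card = 2)
    (hn2 : 2 ≤ Fintype.card V) (v : V) : 2 ≤ (lvl G v 1).card := by
  obtain ⟨u, hune⟩ := Fintype.exists_ne_of_one_lt_card (by omega) v
  have hpos : 0 < G.dist v u := hc.pos_dist_of_ne (fun h => hune h.symm)
  obtain ⟨w, hw, _⟩ := first_step hc hpos
  have hwmem : w ∈ lvl G v 1 := mem_lvl.mpr (SimpleGraph.dist_eq_one_iff_adj.mpr hw)
  by_contra hcard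
  push_neg at hcard
  have huniq : ∀ w', G.Adj v w' → w' = w := by
    intro w' hw'
    by_contra hne
    have h2 : ({w, w'} : Finset V) ⊆ lvl G v 1 := by
      intro a ha
      rcases Finset.mem_insert.mp ha with rfl | ha
      · exact hwmem
      · rw [Finset.mem_singleton] at ha; subst ha
        exact mem_lvl.mpr (SimpleGraph.dist_eq_one_iff_adj.mpr hw')
    have := Finset.card_le_card h2
    rw [Finset.card_pair (fun h => hne h.symm)] at this
    omega
  have hvw : v ≠ w := hw.ne
  have hNe : Npair G {v, w} = ∅ := by
    rw [Finset.eq_empty_iff_forall_notMem]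
    intro u' hu'
    have hd := mem_Npair_pair.mp hu'
    by_cases huv : u' = v
    · subst huv
      rw [SimpleGraph.dist_self, SimpleGraph.dist_eq_one_iff_adj.mpr hw] at hd
      omega
    · have hpos' : 0 < G.dist v u' := hc.pos_dist_of_ne (fun h => huv h.symm)
      obtain ⟨p, hp, hd2⟩ := first_step hc hpos'
      have hpw : p = w := huniq p hp
      rw [hpw] at hd2
      have e1 : G.dist u' v = G.dist v u' := SimpleGraph.dist_comm
      have e2 : G.dist u' w = G.dist w u' := SimpleGraph.dist_comm
      omega
  have := hcard2 {v, w} (Finset.card_pair hvw)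
  rw [hNe] at this
  simp at this

/-- cut-vertex style contradiction: a singleton level strictly below a repeated level -/
lemma cut_contra (hc : G.Connected)
    (hNle : ∀ p : Finset V, p.card = 2 → (Npair G p).card ≤ 2)
    {z c u1 u2 : V} {r t : ℕ} (hr2 : 2 ≤ r) (hrt : r < t)
    (hsing : ∀ y, G.dist z y = r → y = c)
    (h1 : G.dist z u1 = t) (h2 : G.dist z u2 = t) (hne : u1 ≠ u2) : False := by
  have hpos1 : 0 < G.dist z u1 := by omega
  obtain ⟨w0, hw0, _⟩ := first_step hc hpos1
  have hdw0 : G.dist z w0 = 1 := SimpleGraph.dist_eq_one_iff_adj.mpr hw0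
  obtain ⟨y, hy, _⟩ := level_nonempty hc (show r ≤ G.dist z u1 by omega)
  have hzc : G.dist z c = r := by rw [← hsing y hy]; exact hy
  have hcut : ∀ w : V, G.dist z w ≤ 1 → ∀ u : V, G.dist z u = t →
      G.dist w u = G.dist w c + G.dist c u := by
    intro w hw u hu
    apply cut_add hc
    intro p
    obtain ⟨c', hc', hd'⟩ := ivt_walk (z := z) (r := r) hc p (by omega) (by omega)
    rwa [hsing c' hd'] at hc'
  have hzz : G.dist z z ≤ 1 := by rw [SimpleGraph.dist_self]; omega
  have hc1 : G.dist z u1 = G.dist z c + G.dist c u1 := hcut z hzz u1 h1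
  have hc2 : G.dist z u2 = G.dist z c + G.dist c u2 := hcut z hzz u2 h2
  have hw1 : G.dist w0 u1 = G.dist w0 c + G.dist c u1 := hcut w0 (le_of_eq hdw0) u1 h1
  have hw2 : G.dist w0 u2 = G.dist w0 c + G.dist c u2 := hcut w0 (le_of_eq hdw0) u2 h2
  have hzw0 : z ≠ w0 := hw0.ne
  have hzc' : z ≠ c := by
    rintro rfl; rw [SimpleGraph.dist_self] at hzc; omega
  have hw0c : w0 ≠ c := by
    rintro rfl; omega
  have hsub : ({z, w0, c} : Finset V) ⊆ Npair G {u1, u2} := by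
    intro a ha
    rcases Finset.mem_insert.mp ha with rfl | ha
    · exact mem_Npair_pair.mpr (by omega)
    · rcases Finset.mem_insert.mp ha with rfl | ha
      · exact mem_Npair_pair.mpr (by omega)
      · rw [Finset.mem_singleton] at ha; subst ha
        exact mem_Npair_pair.mpr (by omega)
  have hcard3 : ({z, w0, c} : Finset V).card = 3 := by
    rw [Finset.card_insert_of_notMem, Finset.card_pair hw0c]
    simp only [Finset.mem_insert, Finset.mem_singleton]
    push_neg
    exact ⟨hzw0, hzc'⟩
  have hle := Finset.card_le_card hsub
  have h2' := hNle {u1, u2} (Finset.card_pair hne)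
  omega

/-- there cannot be two essentially different pairs unresolved by both a and b -/
lemma no_two_pairs
    (hcard2 : ∀ p : Finset V, p.card = 2 → (Npair G p).card = 2)
    (hinj2 : ∀ p q : Finset V, p.card = 2 → q.card = 2 → Npair G p = Npair G q → p = q)
    {a b u1 v1 u2 v2 : V} (hab : a ≠ b) (h1 : u1 ≠ v1) (h2 : u2 ≠ v2)
    (hne1 : u1 ≠ u2) (hne2 : u1 ≠ v2)
    (e1a : G.dist a u1 = G.dist a v1) (e1b : G.dist b u1 = G.dist b v1)
    (e2a : G.dist a u2 = G.dist a v2) (e2b : G.dist b u2 = G.dist b v2) : False := by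
  have heq := eq_pair_of_two_eqd hcard2 hinj2 hab h1 h2 e1a e1b e2a e2b
  have : u1 ∈ ({u2, v2} : Finset V) := by
    rw [← heq]; exact Finset.mem_insert_self u1 {v1}
  rcases Finset.mem_insert.mp this with h | h
  · exact hne1 h
  · exact hne2 (Finset.mem_singleton.mp h)

/-- a level of size ≥ 4 contains a collision pair for any neighbor w of v -/
lemma pair_of_level4 (hc : G.Connected) {D : ℕ} (hmax : ∀ u v : V, G.dist u v ≤ D)
    {v w : V} (hw : G.Adj v w) {j : ℕ} (hj1 : 1 ≤ j) (h4 : 4 ≤ (lvl G v j).card) :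
    ∃ u1 u2 : V, u1 ≠ u2 ∧ G.dist v u1 = j ∧ G.dist v u2 = j ∧
      G.dist w u1 = G.dist w u2 := by
  have hdvw : G.dist v w = 1 := SimpleGraph.dist_eq_one_iff_adj.mpr hw
  rcases Nat.lt_or_ge j 2 with hj2 | hj2
  · -- j = 1
    have hj : j = 1 := by omega
    subst hj
    have hScard : 3 ≤ ((lvl G v 1).erase w).card := by
      have := Finset.card_erase_of_mem (mem_lvl.mpr hdvw)
      omega
    have hmap : ∀ u ∈ (lvl G v 1).erase w, G.dist w u ∈ ({1, 2} : Finset ℕ) := by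
      intro u hu
      obtain ⟨hune, hul⟩ := Finset.mem_erase.mp hu
      have hdu : G.dist v u = 1 := mem_lvl.mp hul
      have htri : G.dist w u ≤ G.dist w v + G.dist v u := hc.dist_triangle
      have hwv : G.dist w v = 1 := by rw [SimpleGraph.dist_comm]; exact hdvw
      have hpos : 0 < G.dist w u := hc.pos_dist_of_ne (fun h => hune h.symm)
      simp only [Finset.mem_insert, Finset.mem_singleton]
      omega
    obtain ⟨u1, hu1, u2, hu2, hne, he⟩ :=
      pigeon1 hmap (lt_of_le_of_lt (card2 1 2) (by omega))
    exact ⟨u1, u2, hne, mem_lvl.mp (Finset.mem_of_mem_erase hu1),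
      mem_lvl.mp (Finset.mem_of_mem_erase hu2), he⟩
  · have hmap : ∀ u ∈ lvl G v j, G.dist w u ∈ ({j - 1, j, j + 1} : Finset ℕ) := by
      intro u hu
      have hdu : G.dist v u = j := mem_lvl.mp hu
      have htri : G.dist w u ≤ G.dist w v + G.dist v u := hc.dist_triangle
      have htri2 : G.dist v u ≤ G.dist v w + G.dist w u := hc.dist_triangle
      have hwv : G.dist w v = 1 := by rw [SimpleGraph.dist_comm]; exact hdvw
      simp only [Finset.mem_insert, Finset.mem_singleton]
      omega
    obtain ⟨u1, hu1, u2, hu2, hne, he⟩ :=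
      pigeon1 hmap (lt_of_le_of_lt (card3 _ _ _) (by omega))
    exact ⟨u1, u2, hne, mem_lvl.mp hu1, mem_lvl.mp hu2, he⟩

/-- two collision pairs (for v and its neighbor w) at two different levels: impossible -/
lemma no_pairs_two_levels
    (hcard2 : ∀ p : Finset V, p.card = 2 → (Npair G p).card = 2)
    (hinj2 : ∀ p q : Finset V, p.card = 2 → q.card = 2 → Npair G p = Npair G q → p = q)
    {v w : V} (hvw : v ≠ w) {j1 j2 : ℕ} (hj : j1 ≠ j2) {u1 v1 u2 v2 : V}
    (h1 : u1 ≠ v1) (h2 : u2 ≠ v2)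
    (l1 : G.dist v u1 = j1) (l1' : G.dist v v1 = j1)
    (l2 : G.dist v u2 = j2) (l2' : G.dist v v2 = j2)
    (c1 : G.dist w u1 = G.dist w v1) (c2 : G.dist w u2 = G.dist w v2) : False := by
  refine no_two_pairs hcard2 hinj2 hvw h1 h2 ?_ ?_ (l1.trans l1'.symm) c1
    (l2.trans l2'.symm) c2
  · rintro rfl; exact hj (l1.symm.trans l2)
  · rintro rfl; exact hj (l1.symm.trans l2')

/-- Per-vertex level classification. -/
lemma classify (hc : G.Connected)
    (hcard2 : ∀ p : Finset V, p.card = 2 → (Npair G p).card = 2)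
    (hinj2 : ∀ p q : Finset V, p.card = 2 → q.card = 2 → Npair G p = Npair G q → p = q)
    {D : ℕ} (hmax : ∀ u v : V, G.dist u v ≤ D)
    (hn2 : 2 ≤ Fintype.card V) (v : V)
    (hsumm : ∑ j ∈ Icc 1 D, (lvl G v j).card = Fintype.card V - 1)
    (hsumc : ∑ j ∈ Icc 1 D, ((lvl G v j).card).choose 2 = Fintype.card V - 1) :
    (∀ j ∈ Icc 1 D, (lvl G v j).card ≤ 4) ∧
    ((Icc 1 D).filter (fun j => (lvl G v j).card = 4)).card ≤ 1 ∧
    ((Icc 1 D).filter (fun j => 1 ≤ (lvl G v j).card ∧ (lvl G v j).card ≤ 2)).card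
      = 2 * ((Icc 1 D).filter (fun j => (lvl G v j).card = 4)).card ∧
    ∃ r3 : ℕ,
      ((Icc 1 D).filter (fun j => 1 ≤ (lvl G v j).card)).card
        = ((Icc 1 D).filter (fun j => 1 ≤ (lvl G v j).card ∧ (lvl G v j).card ≤ 2)).card
          + ((Icc 1 D).filter (fun j => (lvl G v j).card = 4)).card + r3 ∧
      Fintype.card V - 1
        = (∑ j ∈ (Icc 1 D).filter (fun j => 1 ≤ (lvl G v j).card ∧ (lvl G v j).card ≤ 2),
            (lvl G v j).card)
          + 4 * ((Icc 1 D).filter (fun j => (lvl G v j).card = 4)).card + 3 * r3 := by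
  classical
  have h2n := two_neighbors hc hcard2 hn2 v
  obtain ⟨w, hwmem⟩ := Finset.card_pos.mp (show 0 < (lvl G v 1).card by omega)
  have hw : G.Adj v w := SimpleGraph.dist_eq_one_iff_adj.mp (mem_lvl.mp hwmem)
  have hwv : G.dist w v = 1 := by
    rw [SimpleGraph.dist_comm]; exact SimpleGraph.dist_eq_one_iff_adj.mpr hw
  -- (1) every level has size at most 4
  have h4 : ∀ j ∈ Icc 1 D, (lvl G v j).card ≤ 4 := by
    intro j hj
    by_contra h5
    push_neg at h5
    have hj1 : 1 ≤ j := (Finset.mem_Icc.mp hj).1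
    rcases Nat.lt_or_ge j 2 with hj2 | hj2
    · have hj' : j = 1 := by omega
      subst hj'
      have hScard : 4 ≤ ((lvl G v 1).erase w).card := by
        have := Finset.card_erase_of_mem hwmem
        omega
      have hmap : ∀ u ∈ (lvl G v 1).erase w, G.dist w u ∈ ({1, 2} : Finset ℕ) := by
        intro u hu
        obtain ⟨hune, hul⟩ := Finset.mem_erase.mp hu
        have hdu : G.dist v u = 1 := mem_lvl.mp hul
        have htri : G.dist w u ≤ G.dist w v + G.dist v u := hc.dist_triangle
        have hpos : 0 < G.dist w u := hc.pos_dist_of_ne (fun h => hune h.symm)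
        simp only [Finset.mem_insert, Finset.mem_singleton]
        omega
      obtain ⟨u1, hu1, v1, hv1, u2, hu2, v2, hv2, hne1, hne2, hd1, hd2, hx1, hx2⟩ :=
        pigeon2 hmap (le_trans (show ({1,2} : Finset ℕ).card + 2 ≤ 4 by
          have := card2 1 2; omega) hScard)
      exact no_two_pairs hcard2 hinj2 hw.ne hne1 hne2 hx1 hx2
        ((mem_lvl.mp (Finset.mem_of_mem_erase hu1)).trans
          (mem_lvl.mp (Finset.mem_of_mem_erase hv1)).symm) hd1
        ((mem_lvl.mp (Finset.mem_of_mem_erase hu2)).trans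
          (mem_lvl.mp (Finset.mem_of_mem_erase hv2)).symm) hd2
    · have hmap : ∀ u ∈ lvl G v j, G.dist w u ∈ ({j - 1, j, j + 1} : Finset ℕ) := by
        intro u hu
        have hdu : G.dist v u = j := mem_lvl.mp hu
        have htri : G.dist w u ≤ G.dist w v + G.dist v u := hc.dist_triangle
        have htri2 : G.dist v u ≤ G.dist v w + G.dist w u := hc.dist_triangle
        have hvw' : G.dist v w = 1 := SimpleGraph.dist_eq_one_iff_adj.mpr hw
        simp only [Finset.mem_insert, Finset.mem_singleton]
        omega
      obtain ⟨u1, hu1, v1, hv1, u2, hu2, v2, hv2, hne1, hne2, hd1, hd2, hx1, hx2⟩ :=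
        pigeon2 hmap (le_trans (show ({j-1,j,j+1} : Finset ℕ).card + 2 ≤ 5 by
          have := card3 (j-1) j (j+1); omega) h5)
      exact no_two_pairs hcard2 hinj2 hw.ne hne1 hne2 hx1 hx2
        ((mem_lvl.mp hu1).trans (mem_lvl.mp hv1).symm) hd1
        ((mem_lvl.mp hu2).trans (mem_lvl.mp hv2).symm) hd2
  -- (2) at most one level of size 4
  have hQ1 : ((Icc 1 D).filter (fun j => (lvl G v j).card = 4)).card ≤ 1 := by
    by_contra hQ
    push_neg at hQ
    obtain ⟨j1, hj1, j2, hj2, hjne⟩ := Finset.one_lt_card.mp hQ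
    obtain ⟨hj1I, hj1c⟩ := Finset.mem_filter.mp hj1
    obtain ⟨hj2I, hj2c⟩ := Finset.mem_filter.mp hj2
    obtain ⟨a1, b1, hab1, la1, lb1, ca1⟩ :=
      pair_of_level4 hc hmax hw (Finset.mem_Icc.mp hj1I).1 (by omega)
    obtain ⟨a2, b2, hab2, la2, lb2, ca2⟩ :=
      pair_of_level4 hc hmax hw (Finset.mem_Icc.mp hj2I).1 (by omega)
    exact no_pairs_two_levels hcard2 hinj2 hw.ne hjne hab1 hab2 la1 lb1 la2 lb2 ca1 ca2
  -- sums: abbreviations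
  set A := Icc 1 D with hA
  set p1 : ℕ → Prop := fun j => 1 ≤ (lvl G v j).card ∧ (lvl G v j).card ≤ 2 with hp1
  set p2 : ℕ → Prop := fun j => (lvl G v j).card = 4 with hp2
  have hTQ : (A.filter p1).card = 2 * (A.filter p2).card ∧
      ∃ r3 : ℕ, (A.filter (fun j => 1 ≤ (lvl G v j).card)).card
          = (A.filter p1).card + (A.filter p2).card + r3 ∧
        Fintype.card V - 1
          = (∑ j ∈ A.filter p1, (lvl G v j).card) + 4 * (A.filter p2).card + 3 * r3 := by
    have hsplit1 : (∑ j ∈ A.filter p1, ((lvl G v j).card).choose 2)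
        + (∑ j ∈ A.filter (fun j => ¬ p1 j), ((lvl G v j).card).choose 2)
        = Fintype.card V - 1 := by
      rw [Finset.sum_filter_add_sum_filter_not]; exact hsumc
    have hsplit1m : (∑ j ∈ A.filter p1, (lvl G v j).card)
        + (∑ j ∈ A.filter (fun j => ¬ p1 j), (lvl G v j).card)
        = Fintype.card V - 1 := by
      rw [Finset.sum_filter_add_sum_filter_not]; exact hsumm
    -- within ¬p1 split by p2
    have hfilter_eq : (A.filter (fun j => ¬ p1 j)).filter p2 = A.filter p2 := by
      ext j
      simp only [Finset.mem_filter, hp1, hp2]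
      constructor
      · rintro ⟨⟨hj, _⟩, h⟩; exact ⟨hj, h⟩
      · rintro ⟨hj, h⟩; exact ⟨⟨hj, by omega⟩, h⟩
    have hsplit2 : (∑ j ∈ A.filter p2, ((lvl G v j).card).choose 2)
        + (∑ j ∈ (A.filter (fun j => ¬ p1 j)).filter (fun j => ¬ p2 j),
            ((lvl G v j).card).choose 2)
        = ∑ j ∈ A.filter (fun j => ¬ p1 j), ((lvl G v j).card).choose 2 := by
      rw [← hfilter_eq, Finset.sum_filter_add_sum_filter_not]
    have hsplit2m : (∑ j ∈ A.filter p2, (lvl G v j).card)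
        + (∑ j ∈ (A.filter (fun j => ¬ p1 j)).filter (fun j => ¬ p2 j), (lvl G v j).card)
        = ∑ j ∈ A.filter (fun j => ¬ p1 j), (lvl G v j).card := by
      rw [← hfilter_eq, Finset.sum_filter_add_sum_filter_not]
    -- rest has values 0 or 3, so choose-2 equals the value itself
    have hrest : ∀ j ∈ (A.filter (fun j => ¬ p1 j)).filter (fun j => ¬ p2 j),
        ((lvl G v j).card).choose 2 = (lvl G v j).card := by
      intro j hj
      obtain ⟨hj', hnp2⟩ := Finset.mem_filter.mp hj
      obtain ⟨hjA, hnp1⟩ := Finset.mem_filter.mp hj'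
      have hle4 := h4 j hjA
      simp only [hp1, hp2] at hnp1 hnp2
      have : (lvl G v j).card = 0 ∨ (lvl G v j).card = 3 := by omega
      rcases this with h | h <;> rw [h] <;> rfl
    have hrest_eq : (∑ j ∈ (A.filter (fun j => ¬ p1 j)).filter (fun j => ¬ p2 j),
        ((lvl G v j).card).choose 2)
        = ∑ j ∈ (A.filter (fun j => ¬ p1 j)).filter (fun j => ¬ p2 j), (lvl G v j).card :=
      Finset.sum_congr rfl hrest
    -- on T: m = choose + 1
    have hTsum : (∑ j ∈ A.filter p1, (lvl G v j).card)
        = (∑ j ∈ A.filter p1, ((lvl G v j).card).choose 2) + (A.filter p1).card := by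
      have : ∀ j ∈ A.filter p1, (lvl G v j).card = ((lvl G v j).card).choose 2 + 1 := by
        intro j hj
        have := (Finset.mem_filter.mp hj).2
        simp only [hp1] at this
        have : (lvl G v j).card = 1 ∨ (lvl G v j).card = 2 := by omega
        rcases this with h | h <;> rw [h] <;> rfl
      rw [Finset.sum_congr rfl this, Finset.sum_add_distrib, Finset.sum_const,
        smul_eq_mul, mul_one]
    -- on Q: choose = m + 2, and m = 4
    have hQsum : (∑ j ∈ A.filter p2, ((lvl G v j).card).choose 2)
        = 4 * (A.filter p2).card + 2 * (A.filter p2).card := by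
      have : ∀ j ∈ A.filter p2, ((lvl G v j).card).choose 2 = 6 := by
        intro j hj
        have := (Finset.mem_filter.mp hj).2
        simp only [hp2] at this
        rw [this]; rfl
      rw [Finset.sum_congr rfl this, Finset.sum_const, smul_eq_mul]
      ring
    have hQsumm : (∑ j ∈ A.filter p2, (lvl G v j).card) = 4 * (A.filter p2).card := by
      have : ∀ j ∈ A.filter p2, (lvl G v j).card = 4 := by
        intro j hj
        have := (Finset.mem_filter.mp hj).2
        simpa only [hp2] using this
      rw [Finset.sum_congr rfl this, Finset.sum_const, smul_eq_mul, mul_comm]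
    -- rest sum = 3 * r3
    set R := (A.filter (fun j => ¬ p1 j)).filter (fun j => ¬ p2 j) with hR
    have hr3sum : (∑ j ∈ R, (lvl G v j).card) = 3 * (R.filter (fun j => (lvl G v j).card = 3)).card := by
      have hz : ∀ j ∈ R.filter (fun j => ¬ (lvl G v j).card = 3), (lvl G v j).card = 0 := by
        intro j hj
        obtain ⟨hjR, hn3⟩ := Finset.mem_filter.mp hj
        have := hrest j hjR
        obtain ⟨hj', hnp2⟩ := Finset.mem_filter.mp hjR
        obtain ⟨hjA, hnp1⟩ := Finset.mem_filter.mp hj'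
        have hle4 := h4 j hjA
        simp only [hp1, hp2] at hnp1 hnp2
        omega
      have h3 : ∀ j ∈ R.filter (fun j => (lvl G v j).card = 3), (lvl G v j).card = 3 := by
        intro j hj; exact (Finset.mem_filter.mp hj).2
      have := Finset.sum_filter_add_sum_filter_not R (fun j => (lvl G v j).card = 3)
        (fun j => (lvl G v j).card)
      rw [Finset.sum_congr rfl h3, Finset.sum_congr rfl hz, Finset.sum_const,
        Finset.sum_const, smul_eq_mul, smul_eq_mul, mul_comm, mul_zero] at this
      omega
    -- support partition
    have hsupp : (A.filter (fun j => 1 ≤ (lvl G v j).card)).card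
        = (A.filter p1).card + (A.filter p2).card
          + (R.filter (fun j => (lvl G v j).card = 3)).card := by
      have hu : A.filter (fun j => 1 ≤ (lvl G v j).card)
          = (A.filter p1) ∪ (A.filter p2) ∪ (R.filter (fun j => (lvl G v j).card = 3)) := by
        ext j
        simp only [Finset.mem_union, Finset.mem_filter, hR, hp1, hp2]
        constructor
        · rintro ⟨hjA, h1⟩
          have := h4 j hjA
          rcases Nat.lt_or_ge (lvl G v j).card 3 with h | h
          · exact Or.inl (Or.inl ⟨hjA, by omega, by omega⟩)
          · rcases Nat.lt_or_ge (lvl G v j).card 4 with h' | h'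
            · exact Or.inr ⟨⟨⟨hjA, by omega⟩, by omega⟩, by omega⟩
            · exact Or.inl (Or.inr ⟨hjA, by omega⟩)
        · rintro ((⟨hjA, h⟩ | ⟨hjA, h⟩) | ⟨⟨⟨hjA, _⟩, _⟩, h⟩)
          · exact ⟨hjA, by omega⟩
          · exact ⟨hjA, by omega⟩
          · exact ⟨hjA, by omega⟩
      rw [hu, Finset.card_union_of_disjoint, Finset.card_union_of_disjoint]
      · rw [Finset.disjoint_left]
        intro j hj hj'
        obtain ⟨hjA, h1⟩ := Finset.mem_filter.mp hj
        obtain ⟨hjA', h2⟩ := Finset.mem_filter.mp hj'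
        simp only [hp1, hp2] at h1 h2
        omega
      · rw [Finset.disjoint_left]
        intro j hj hj'
        have hjR : j ∈ R := (Finset.mem_filter.mp hj').1
        have hnp2 : ¬ p2 j := (Finset.mem_filter.mp hjR).2
        have hnp1 : ¬ p1 j := (Finset.mem_filter.mp (Finset.mem_filter.mp hjR).1).2
        rcases Finset.mem_union.mp hj with hj | hj
        · exact hnp1 (Finset.mem_filter.mp hj).2
        · exact hnp2 (Finset.mem_filter.mp hj).2
    refine ⟨by omega, (R.filter (fun j => (lvl G v j).card = 3)).card, hsupp, by omega⟩
  exact ⟨h4, hQ1, hTQ.1, hTQ.2⟩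

lemma exists_nbr (hc : G.Connected) (hn2 : 2 ≤ Fintype.card V) (v : V) :
    ∃ w, G.Adj v w := by
  obtain ⟨u, hune⟩ := Fintype.exists_ne_of_one_lt_card (by omega) v
  have hpos : 0 < G.dist v u := hc.pos_dist_of_ne (fun h => hune h.symm)
  obtain ⟨w, hw, _⟩ := first_step hc hpos
  exact ⟨w, hw⟩

/-- a vertex with a 4-level has top level (at the diameter D) of size at most 2 -/
lemma top_small (hc : G.Connected)
    (hcard2 : ∀ p : Finset V, p.card = 2 → (Npair G p).card = 2)
    (hinj2 : ∀ p q : Finset V, p.card = 2 → q.card = 2 → Npair G p = Npair G q → p = q)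
    {D : ℕ} (hmax : ∀ u v : V, G.dist u v ≤ D) (hD : 2 ≤ D)
    (hn2 : 2 ≤ Fintype.card V) {v : V} {k : ℕ}
    (hk1 : 1 ≤ k) (hk4 : (lvl G v k).card = 4) :
    (lvl G v D).card ≤ 2 := by
  obtain ⟨w, hw⟩ := exists_nbr hc hn2 v
  by_contra h3
  push_neg at h3
  have hvw : G.dist v w = 1 := SimpleGraph.dist_eq_one_iff_adj.mpr hw
  have hmapD : ∀ u ∈ lvl G v D, G.dist w u ∈ ({D - 1, D} : Finset ℕ) := by
    intro u hu
    have hdu : G.dist v u = D := mem_lvl.mp hu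
    have htri : G.dist v u ≤ G.dist v w + G.dist w u := hc.dist_triangle
    have hle := hmax w u
    simp only [Finset.mem_insert, Finset.mem_singleton]
    omega
  by_cases hkD : k = D
  · have hk4' : (lvl G v D).card = 4 := by rw [← hkD]; exact hk4
    obtain ⟨u1, hu1, v1, hv1, u2, hu2, v2, hv2, hne1, hne2, hd1, hd2, hx1, hx2⟩ :=
      pigeon2 hmapD (le_trans (show ({D-1, D} : Finset ℕ).card + 2 ≤ 4 by
        have := card2 (D-1) D; omega) (le_of_eq hk4'.symm))
    exact no_two_pairs hcard2 hinj2 hw.ne hne1 hne2 hx1 hx2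
      ((mem_lvl.mp hu1).trans (mem_lvl.mp hv1).symm) hd1
      ((mem_lvl.mp hu2).trans (mem_lvl.mp hv2).symm) hd2
  · obtain ⟨u1, hu1, v1, hv1, hne1, hd1⟩ :=
      pigeon1 hmapD (lt_of_le_of_lt (card2 (D-1) D) (by omega))
    obtain ⟨a2, b2, hab2, la2, lb2, ca2⟩ := pair_of_level4 hc hmax hw hk1 (by omega)
    exact no_pairs_two_levels hcard2 hinj2 hw.ne (fun h => hkD h.symm) hne1 hab2
      (mem_lvl.mp hu1) (mem_lvl.mp hv1) la2 lb2 hd1 ca2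

/-- Main lemma: diameter at least 3 is impossible (given an endpoint of degree 2). -/
lemma main3 (hc : G.Connected)
    (hN3 : ∀ S : Finset V, S.card = 3 → IsResolvingSet G ↑S)
    (hN2 : ∀ S : Finset V, S.card = 2 → ¬ IsResolvingSet G ↑S)
    {D : ℕ} {x z : V} (hmax : ∀ u v : V, G.dist u v ≤ D)
    (hxz : G.dist x z = D) (hD : 3 ≤ D)
    (hz2 : (lvl G z 1).card = 2) : False := by
  classical
  obtain ⟨hcard2, hinj2⟩ := Nbij hN3 hN2
  have hNle : ∀ p : Finset V, p.card = 2 → (Npair G p).card ≤ 2 :=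
    fun p hp => le_of_eq (hcard2 p hp)
  have hxzne : x ≠ z := by
    rintro rfl; rw [SimpleGraph.dist_self] at hxz; omega
  have hn2 : 2 ≤ Fintype.card V := Fintype.one_lt_card_iff_nontrivial.mpr ⟨⟨x, z, hxzne⟩⟩
  have hzx : G.dist z x = D := by rw [SimpleGraph.dist_comm]; exact hxz
  -- full supports for x and z
  have hlz : ∀ j ∈ Icc 1 D, 1 ≤ (lvl G z j).card := by
    intro j hj
    obtain ⟨u, hu, _⟩ := level_nonempty hc
      (show j ≤ G.dist z x by rw [hzx]; exact (Finset.mem_Icc.mp hj).2)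
    exact Finset.card_pos.mpr ⟨u, mem_lvl.mpr hu⟩
  have hlx : ∀ j ∈ Icc 1 D, 1 ≤ (lvl G x j).card := by
    intro j hj
    obtain ⟨u, hu, _⟩ := level_nonempty hc
      (show j ≤ G.dist x z by rw [hxz]; exact (Finset.mem_Icc.mp hj).2)
    exact Finset.card_pos.mpr ⟨u, mem_lvl.mpr hu⟩
  -- classification for z
  obtain ⟨h4z, hQ1z, hTQz, r3z, hsuppz, hsumz⟩ := classify hc hcard2 hinj2 hmax hn2 z
    (sum_m hc hmax z) (sum_choose hc hN3 hN2 hmax z)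
  have hsuppzfull : ((Icc 1 D).filter (fun j => 1 ≤ (lvl G z j).card)).card = D := by
    rw [Finset.filter_true_of_mem hlz, Nat.card_Icc]; omega
  have h1T : (1 : ℕ) ∈ (Icc 1 D).filter
      (fun j => 1 ≤ (lvl G z j).card ∧ (lvl G z j).card ≤ 2) :=
    Finset.mem_filter.mpr ⟨Finset.mem_Icc.mpr ⟨le_refl 1, by omega⟩, by omega⟩
  have hQz1 : ((Icc 1 D).filter (fun j => (lvl G z j).card = 4)).card = 1 := by
    have hT1 : 1 ≤ ((Icc 1 D).filter
        (fun j => 1 ≤ (lvl G z j).card ∧ (lvl G z j).card ≤ 2)).card :=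
      Finset.card_pos.mpr ⟨1, h1T⟩
    omega
  obtain ⟨k, hk⟩ := Finset.card_eq_one.mp hQz1
  have hkmem : k ∈ Icc 1 D ∧ (lvl G z k).card = 4 := by
    have hkk : k ∈ (Icc 1 D).filter (fun j => (lvl G z j).card = 4) := by
      rw [hk]; exact Finset.mem_singleton_self k
    exact ⟨(Finset.mem_filter.mp hkk).1, (Finset.mem_filter.mp hkk).2⟩
  have hk1 : 1 ≤ k := (Finset.mem_Icc.mp hkmem.1).1
  -- top of z has size 1 or 2
  have htopz : (lvl G z D).card ≤ 2 :=
    top_small hc hcard2 hinj2 hmax (by omega) hn2 hk1 hkmem.2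
  have htopz1 : 1 ≤ (lvl G z D).card := hlz D (Finset.mem_Icc.mpr ⟨by omega, le_refl D⟩)
  -- T z = {1, D}
  have hDT : D ∈ (Icc 1 D).filter
      (fun j => 1 ≤ (lvl G z j).card ∧ (lvl G z j).card ≤ 2) :=
    Finset.mem_filter.mpr ⟨Finset.mem_Icc.mpr ⟨by omega, le_refl D⟩, ⟨htopz1, htopz⟩⟩
  have hTz : (Icc 1 D).filter
      (fun j => 1 ≤ (lvl G z j).card ∧ (lvl G z j).card ≤ 2) = {1, D} := by
    symm
    apply Finset.eq_of_subset_of_card_le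
    · intro j hj
      rcases Finset.mem_insert.mp hj with rfl | hj
      · exact h1T
      · rw [Finset.mem_singleton] at hj; subst hj; exact hDT
    · rw [Finset.card_pair (show (1 : ℕ) ≠ D by omega)]; omega
  have hmid : ∀ j, 2 ≤ j → j < D → 3 ≤ (lvl G z j).card := by
    intro j h2j hjD
    have hjI : j ∈ Icc 1 D := Finset.mem_Icc.mpr ⟨by omega, by omega⟩
    have h1j : 1 ≤ (lvl G z j).card := hlz j hjI
    by_contra hh
    push_neg at hh
    have : j ∈ ({1, D} : Finset ℕ) := by
      rw [← hTz]; exact Finset.mem_filter.mpr ⟨hjI, h1j, by omega⟩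
    rcases Finset.mem_insert.mp this with h | h
    · omega
    · rw [Finset.mem_singleton] at h; omega
  -- sum over T z
  have hSSz : (∑ j ∈ (Icc 1 D).filter
      (fun j => 1 ≤ (lvl G z j).card ∧ (lvl G z j).card ≤ 2), (lvl G z j).card)
      = 2 + (lvl G z D).card := by
    rw [hTz, Finset.sum_pair (show (1 : ℕ) ≠ D by omega), hz2]
  -- n - 1 in terms of D
  have hnval : Fintype.card V - 1 = 2 + (lvl G z D).card + 4 + 3 * (D - 3) := by
    have hr3z : r3z = D - 3 := by omega
    rw [hsumz, hSSz, hQz1, hr3z]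
  rcases (show (lvl G z D).card = 1 ∨ (lvl G z D).card = 2 by omega) with htz | htz
  · -- Branch A : singleton top for z
    obtain ⟨h4x, hQ1x, hTQx, r3x, hsuppx, hsumx⟩ := classify hc hcard2 hinj2 hmax hn2 x
      (sum_m hc hmax x) (sum_choose hc hN3 hN2 hmax x)
    have hsuppxfull : ((Icc 1 D).filter (fun j => 1 ≤ (lvl G x j).card)).card = D := by
      rw [Finset.filter_true_of_mem hlx, Nat.card_Icc]; omega
    set Tx := (Icc 1 D).filter
      (fun j => 1 ≤ (lvl G x j).card ∧ (lvl G x j).card ≤ 2) with hTx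
    have hSSxub : (∑ j ∈ Tx, (lvl G x j).card) ≤ 2 * Tx.card := by
      calc (∑ j ∈ Tx, (lvl G x j).card) ≤ ∑ _j ∈ Tx, 2 :=
            Finset.sum_le_sum (fun j hj => (Finset.mem_filter.mp hj).2.2)
        _ = 2 * Tx.card := by rw [Finset.sum_const, smul_eq_mul, mul_comm]
    have hSSxlb : Tx.card ≤ (∑ j ∈ Tx, (lvl G x j).card) := by
      calc Tx.card = ∑ _j ∈ Tx, 1 := by rw [Finset.sum_const, smul_eq_mul, mul_one]
        _ ≤ _ := Finset.sum_le_sum (fun j hj => (Finset.mem_filter.mp hj).2.1)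
    have hQx1 : ((Icc 1 D).filter (fun j => (lvl G x j).card = 4)).card = 1 := by omega
    have hSSx3 : (∑ j ∈ Tx, (lvl G x j).card) = 3 := by omega
    have hTx2 : Tx.card = 2 := by omega
    obtain ⟨j1, j2, hj12, hTxeq⟩ := Finset.card_eq_two.mp hTx2
    have hj1m : j1 ∈ Tx := by rw [hTxeq]; exact Finset.mem_insert_self _ _
    have hj2m : j2 ∈ Tx := by
      rw [hTxeq]; exact Finset.mem_insert_of_mem (Finset.mem_singleton_self _)
    have hsum12 : (lvl G x j1).card + (lvl G x j2).card = 3 := by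
      rw [hTxeq, Finset.sum_pair hj12] at hSSx3; exact hSSx3
    have hb1 := (Finset.mem_filter.mp hj1m).2
    have hb2 := (Finset.mem_filter.mp hj2m).2
    have hI1 := (Finset.mem_filter.mp hj1m).1
    have hI2 := (Finset.mem_filter.mp hj2m).1
    have hoth : ∀ j ∈ Icc 1 D, j ∉ Tx → 3 ≤ (lvl G x j).card := by
      intro j hj hnT
      have h1 := hlx j hj
      by_contra hh
      push_neg at hh
      exact hnT (Finset.mem_filter.mpr ⟨hj, h1, by omega⟩)
    have key : ∃ r1, r1 ∈ Icc 1 D ∧ (lvl G x r1).card = 1 ∧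
        ∀ j ∈ Icc 1 D, j ≠ r1 → 2 ≤ (lvl G x j).card := by
      have mk : ∀ a b : ℕ, a ∈ Tx → b ∈ Tx → (∀ t ∈ Tx, t = a ∨ t = b) →
          (lvl G x a).card = 1 → (lvl G x b).card = 2 →
          ∃ r, r ∈ Icc 1 D ∧ (lvl G x r).card = 1 ∧
            ∀ j ∈ Icc 1 D, j ≠ r → 2 ≤ (lvl G x j).card := by
        intro a b haT hbT hcases h1 h2
        refine ⟨a, (Finset.mem_filter.mp haT).1, h1, ?_⟩
        intro j hj hne
        by_cases hT : j ∈ Tx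
        · rcases hcases j hT with rfl | rfl
          · exact absurd rfl hne
          · omega
        · have := hoth j hj hT; omega
      have hcases : ∀ t ∈ Tx, t = j1 ∨ t = j2 := by
        intro t ht
        rw [hTxeq] at ht
        rcases Finset.mem_insert.mp ht with h | h
        · exact Or.inl h
        · exact Or.inr (Finset.mem_singleton.mp h)
      rcases (show (lvl G x j1).card = 1 ∧ (lvl G x j2).card = 2 ∨
          (lvl G x j1).card = 2 ∧ (lvl G x j2).card = 1 by omega) with ⟨h1, h2⟩ | ⟨h1, h2⟩
      · exact mk j1 j2 hj1m hj2m hcases h1 h2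
      · exact mk j2 j1 hj2m hj1m (fun t ht => Or.symm (hcases t ht)) h2 h1
    obtain ⟨r1, hr1I, hr11, hother⟩ := key
    have hr1ge2 : 2 ≤ r1 := by
      have h21 := two_neighbors hc hcard2 hn2 x
      have hr1ge1 : 1 ≤ r1 := (Finset.mem_Icc.mp hr1I).1
      rcases Nat.lt_or_ge r1 2 with h | h
      · exfalso
        have : r1 = 1 := by omega
        subst this
        omega
      · exact h
    rcases Nat.lt_or_ge r1 D with hr1D | hr1D
    · -- r1 < D : cut contradiction
      obtain ⟨c, hcone⟩ := Finset.card_eq_one.mp hr11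
      have hsing : ∀ y, G.dist x y = r1 → y = c := by
        intro y hy
        have hmem : y ∈ lvl G x r1 := mem_lvl.mpr hy
        rw [hcone] at hmem
        exact Finset.mem_singleton.mp hmem
      have hnext : 2 ≤ (lvl G x (r1 + 1)).card :=
        hother (r1 + 1) (Finset.mem_Icc.mpr ⟨by omega, by omega⟩) (by omega)
      obtain ⟨u1, hu1, u2, hu2, hu12⟩ :=
        Finset.one_lt_card.mp (show 1 < (lvl G x (r1 + 1)).card by omega)
      exact cut_contra hc hNle hr1ge2 (show r1 < r1 + 1 by omega) hsing
        (mem_lvl.mp hu1) (mem_lvl.mp hu2) hu12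
    · -- r1 = D : top of x is {z}
      have htopx1 : (lvl G x D).card = 1 := by
        have : r1 = D := le_antisymm ((Finset.mem_Icc.mp hr1I).2) hr1D
        rw [← this]; exact hr11
      have hzmem : z ∈ lvl G x D := mem_lvl.mpr hxz
      have htopx : ∀ u, G.dist x u = D → u = z := by
        intro u hu
        obtain ⟨c, hcone⟩ := Finset.card_eq_one.mp htopx1
        have h1 : u ∈ lvl G x D := mem_lvl.mpr hu
        rw [hcone] at h1 hzmem
        rw [Finset.mem_singleton.mp h1, ← Finset.mem_singleton.mp hzmem]
      obtain ⟨w1, w2, hw12, hzlvl1⟩ := Finset.card_eq_two.mp hz2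
      have hwprop : ∀ w' ∈ lvl G z 1, G.dist x w' + 1 = D := by
        intro w' hw'
        have hd1 : G.dist z w' = 1 := mem_lvl.mp hw'
        have hcomm : G.dist w' z = 1 := by rw [SimpleGraph.dist_comm]; exact hd1
        have htri : G.dist x z ≤ G.dist x w' + G.dist w' z := hc.dist_triangle
        have hle := hmax x w'
        have hne : G.dist x w' ≠ D := by
          intro h
          have hzw := htopx w' h
          rw [hzw, SimpleGraph.dist_self] at hd1
          omega
        omega
      have hw1m : w1 ∈ lvl G z 1 := by
        rw [hzlvl1]; exact Finset.mem_insert_self _ _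
      have hw2m : w2 ∈ lvl G z 1 := by
        rw [hzlvl1]; exact Finset.mem_insert_of_mem (Finset.mem_singleton_self _)
      have he1 := hwprop w1 hw1m
      have he2 := hwprop w2 hw2m
      have hm2 : 3 ≤ (lvl G z 2).card := hmid 2 (le_refl 2) (by omega)
      have hmap2 : ∀ u ∈ lvl G z 2, G.dist x u ∈ ({D - 2, D - 1} : Finset ℕ) := by
        intro u hu
        have hdu : G.dist z u = 2 := mem_lvl.mp hu
        have htri : G.dist z x ≤ G.dist z u + G.dist u x := hc.dist_triangle
        have hcm : G.dist u x = G.dist x u := SimpleGraph.dist_comm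
        have hle := hmax x u
        have hne : G.dist x u ≠ D := by
          intro h
          have hh := htopx u h
          rw [hh, SimpleGraph.dist_self] at hdu
          omega
        simp only [Finset.mem_insert, Finset.mem_singleton]
        omega
      obtain ⟨ua, hua, ub, hub, huab, hde⟩ :=
        pigeon1 hmap2 (lt_of_le_of_lt (card2 _ _) (by omega))
      exact no_pairs_two_levels hcard2 hinj2 (show z ≠ x from fun h => hxzne h.symm)
        (show (1 : ℕ) ≠ 2 by omega) hw12 huab
        (mem_lvl.mp hw1m) (mem_lvl.mp hw2m) (mem_lvl.mp hua) (mem_lvl.mp hub)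
        (show G.dist x w1 = G.dist x w2 by omega) hde
  · -- Branch B : n = 3D
    have hnB : Fintype.card V - 1 = 3 * D - 1 := by rw [hnval, htz]; omega
    have gen : ∀ v : V, (lvl G v D).card = 2 ∧
        ∃ kv, 1 ≤ kv ∧ kv ≤ D ∧ kv ≠ D ∧ (lvl G v kv).card = 4 := by
      intro v
      obtain ⟨h4v, hQ1v, hTQv, r3v, hsuppv, hsumv⟩ := classify hc hcard2 hinj2 hmax hn2 v
        (sum_m hc hmax v) (sum_choose hc hN3 hN2 hmax v)
      have hSvle : ((Icc 1 D).filter (fun j => 1 ≤ (lvl G v j).card)).card ≤ D := by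
        have := Finset.card_filter_le (Icc 1 D) (fun j => 1 ≤ (lvl G v j).card)
        rw [Nat.card_Icc] at this
        omega
      set Tv := (Icc 1 D).filter
        (fun j => 1 ≤ (lvl G v j).card ∧ (lvl G v j).card ≤ 2) with hTvdef
      have hSSub : (∑ j ∈ Tv, (lvl G v j).card) ≤ 2 * Tv.card := by
        calc (∑ j ∈ Tv, (lvl G v j).card) ≤ ∑ _j ∈ Tv, 2 :=
              Finset.sum_le_sum (fun j hj => (Finset.mem_filter.mp hj).2.2)
          _ = 2 * Tv.card := by rw [Finset.sum_const, smul_eq_mul, mul_comm]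
      have hSSlb : Tv.card ≤ (∑ j ∈ Tv, (lvl G v j).card) := by
        calc Tv.card = ∑ _j ∈ Tv, 1 := by rw [Finset.sum_const, smul_eq_mul, mul_one]
          _ ≤ _ := Finset.sum_le_sum (fun j hj => (Finset.mem_filter.mp hj).2.1)
      have hQv1 : ((Icc 1 D).filter (fun j => (lvl G v j).card = 4)).card = 1 := by omega
      have hSS4 : (∑ j ∈ Tv, (lvl G v j).card) = 4 := by omega
      have hSvfull : ((Icc 1 D).filter (fun j => 1 ≤ (lvl G v j).card)).card = D := by omega
      have hfull : ∀ j ∈ Icc 1 D, 1 ≤ (lvl G v j).card := by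
        have heq : (Icc 1 D).filter (fun j => 1 ≤ (lvl G v j).card) = Icc 1 D :=
          Finset.eq_of_subset_of_card_le (Finset.filter_subset _ _)
            (by rw [Nat.card_Icc]; omega)
        intro j hj
        have : j ∈ (Icc 1 D).filter (fun j => 1 ≤ (lvl G v j).card) := by
          rw [heq]; exact hj
        exact (Finset.mem_filter.mp this).2
      obtain ⟨kv, hkv⟩ := Finset.card_eq_one.mp hQv1
      have hkvm : kv ∈ Icc 1 D ∧ (lvl G v kv).card = 4 := by
        have hh : kv ∈ (Icc 1 D).filter (fun j => (lvl G v j).card = 4) := by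
          rw [hkv]; exact Finset.mem_singleton_self kv
        exact ⟨(Finset.mem_filter.mp hh).1, (Finset.mem_filter.mp hh).2⟩
      have htop2 : (lvl G v D).card ≤ 2 :=
        top_small hc hcard2 hinj2 hmax (by omega) hn2 (Finset.mem_Icc.mp hkvm.1).1 hkvm.2
      have htop1 : 1 ≤ (lvl G v D).card :=
        hfull D (Finset.mem_Icc.mpr ⟨by omega, le_refl D⟩)
      have hDTv : D ∈ Tv := Finset.mem_filter.mpr
        ⟨Finset.mem_Icc.mpr ⟨by omega, le_refl D⟩, htop1, htop2⟩
      obtain ⟨t1, t2, ht12, hTveq⟩ := Finset.card_eq_two.mp (show Tv.card = 2 by omega)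
      have ht1m : t1 ∈ Tv := by rw [hTveq]; exact Finset.mem_insert_self _ _
      have ht2m : t2 ∈ Tv := by
        rw [hTveq]; exact Finset.mem_insert_of_mem (Finset.mem_singleton_self _)
      have hbt1 := (Finset.mem_filter.mp ht1m).2
      have hbt2 := (Finset.mem_filter.mp ht2m).2
      have hsum4 : (lvl G v t1).card + (lvl G v t2).card = 4 := by
        rw [hTveq, Finset.sum_pair ht12] at hSS4; exact hSS4
      have hmD2 : (lvl G v D).card = 2 := by
        rw [hTveq] at hDTv
        rcases Finset.mem_insert.mp hDTv with h | h
        · rw [h]; omega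
        · rw [Finset.mem_singleton] at h; rw [h]; omega
      have hkvD : kv ≠ D := by
        intro h; rw [h] at hkvm; omega
      exact ⟨hmD2, kv, (Finset.mem_Icc.mp hkvm.1).1, (Finset.mem_Icc.mp hkvm.1).2, hkvD,
        hkvm.2⟩
    -- every vertex has degree at most 2
    have degle : ∀ v : V, (lvl G v 1).card ≤ 2 := by
      intro v
      obtain ⟨hvD2, kv, hkv1, hkvle, hkvne, hkv4⟩ := gen v
      obtain ⟨a, b, hab, htopv⟩ := Finset.card_eq_two.mp hvD2
      by_contra h3
      push_neg at h3
      have hda : G.dist v a = D :=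
        mem_lvl.mp (by rw [htopv]; exact Finset.mem_insert_self _ _)
      have hdb : G.dist v b = D :=
        mem_lvl.mp (by rw [htopv]; exact Finset.mem_insert_of_mem (Finset.mem_singleton_self _))
      have hnb : ∀ u ∈ lvl G v 1, (G.dist u a = D ∨ G.dist u b = D) := by
        intro u hu
        have hd1 : G.dist v u = 1 := mem_lvl.mp hu
        have hadj : G.Adj v u := SimpleGraph.dist_eq_one_iff_adj.mp hd1
        have hne : G.dist u a ≠ G.dist u b := by
          intro he
          obtain ⟨a2, b2, hab2, la2, lb2, ca2⟩ := pair_of_level4 hc hmax hadj hkv1 (by omega)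
          exact no_pairs_two_levels hcard2 hinj2 hadj.ne
            (show D ≠ kv from fun h => hkvne h.symm) hab hab2 hda hdb la2 lb2 he ca2
        have hca : G.dist u a = G.dist a u := SimpleGraph.dist_comm
        have hcb : G.dist u b = G.dist b u := SimpleGraph.dist_comm
        have t1 : G.dist v a ≤ G.dist v u + G.dist u a := hc.dist_triangle
        have t2 : G.dist v b ≤ G.dist v u + G.dist u b := hc.dist_triangle
        have m1 := hmax u a
        have m2 := hmax u b
        omega
      have hmap : ∀ u ∈ lvl G v 1, (if G.dist u a = D then a else b) ∈ ({a, b} : Finset V) := by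
        intro u hu
        split
        · exact Finset.mem_insert_self _ _
        · exact Finset.mem_insert_of_mem (Finset.mem_singleton_self _)
      have hcab : ({a, b} : Finset V).card < (lvl G v 1).card := by
        rw [Finset.card_pair hab]; omega
      obtain ⟨w1, hw1, w2, hw2, hwne, hfeq⟩ :=
        Finset.exists_ne_map_eq_of_card_lt_of_maps_to hcab hmap
      have hcomm : ∃ c, G.dist w1 c = D ∧ G.dist w2 c = D ∧ G.dist v c = D := by
        by_cases h1 : G.dist w1 a = D <;> by_cases h2 : G.dist w2 a = D
        · exact ⟨a, h1, h2, hda⟩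
        · exfalso
          rw [if_pos h1, if_neg h2] at hfeq
          exact hab hfeq
        · exfalso
          rw [if_neg h1, if_pos h2] at hfeq
          exact hab hfeq.symm
        · rcases hnb w1 hw1 with h | h
          · exact absurd h h1
          · rcases hnb w2 hw2 with h' | h'
            · exact absurd h' h2
            · exact ⟨b, h, h', hdb⟩
      obtain ⟨c, hc1, hc2, hcv⟩ := hcomm
      have hsub : ({w1, w2, v} : Finset V) ⊆ lvl G c D := by
        intro t ht
        rcases Finset.mem_insert.mp ht with rfl | ht
        · exact mem_lvl.mpr (by rw [SimpleGraph.dist_comm]; exact hc1)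
        · rcases Finset.mem_insert.mp ht with rfl | ht
          · exact mem_lvl.mpr (by rw [SimpleGraph.dist_comm]; exact hc2)
          · rw [Finset.mem_singleton] at ht; subst ht
            exact mem_lvl.mpr (by rw [SimpleGraph.dist_comm]; exact hcv)
      have hw1v : w1 ≠ v := by
        intro h
        have hh := mem_lvl.mp hw1
        rw [h, SimpleGraph.dist_self] at hh
        omega
      have hw2v : w2 ≠ v := by
        intro h
        have hh := mem_lvl.mp hw2
        rw [h, SimpleGraph.dist_self] at hh
        omega
      have hc3 : ({w1, w2, v} : Finset V).card = 3 := by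
        rw [Finset.card_insert_of_notMem, Finset.card_pair hw2v]
        simp only [Finset.mem_insert, Finset.mem_singleton]
        push_neg
        exact ⟨hwne, hw1v⟩
      have hle3 := Finset.card_le_card hsub
      have hgc := (gen c).1
      omega
    -- level growth bound for z
    have hnV : Nonempty V := ⟨z⟩
    have grow : ∀ j, 1 ≤ j → j ≤ D → (lvl G z j).card ≤ 2 := by
      intro j
      induction j with
      | zero => intro h _; omega
      | succ j ih =>
        intro _ hle
        rcases Nat.eq_zero_or_pos j with rfl | hj1
        · exact degle z
        · have hprev := ih (by omega) (by omega)
          have hex : ∀ u, u ∈ lvl G z (j + 1) → ∃ p, G.Adj u p ∧ G.dist z p = j := by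
            intro u hu
            have hd := mem_lvl.mp hu
            obtain ⟨p, hp, hdp⟩ := pred_step hc (show 0 < G.dist z u by omega)
            exact ⟨p, hp, by omega⟩
          choose! f hf1 hf2 using hex
          have hmaps : ∀ u ∈ lvl G z (j + 1), f u ∈ lvl G z j := fun u hu =>
            mem_lvl.mpr (hf2 u hu)
          have hinjf : Set.InjOn f ↑(lvl G z (j + 1)) := by
            intro u1 hu1' u2 hu2' hf12
            have hu1 : u1 ∈ lvl G z (j + 1) := Finset.mem_coe.mp hu1'
            have hu2 : u2 ∈ lvl G z (j + 1) := Finset.mem_coe.mp hu2'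
            by_contra hne
            have hadj1 : G.Adj u1 (f u1) := hf1 u1 hu1
            have hadj2 : G.Adj u2 (f u1) := by rw [hf12]; exact hf1 u2 hu2
            have hdp : G.dist z (f u1) = j := hf2 u1 hu1
            obtain ⟨q, hq, hdq⟩ := pred_step hc (show 0 < G.dist z (f u1) by omega)
            have hd1 : G.dist z u1 = j + 1 := mem_lvl.mp hu1
            have hd2 : G.dist z u2 = j + 1 := mem_lvl.mp hu2
            have hqu1 : q ≠ u1 := by intro h; rw [h] at hdq; omega
            have hqu2 : q ≠ u2 := by intro h; rw [h] at hdq; omega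
            have hsub3 : ({u1, u2, q} : Finset V) ⊆ lvl G (f u1) 1 := by
              intro t ht
              rcases Finset.mem_insert.mp ht with rfl | ht
              · exact mem_lvl.mpr (SimpleGraph.dist_eq_one_iff_adj.mpr hadj1.symm)
              · rcases Finset.mem_insert.mp ht with rfl | ht
                · exact mem_lvl.mpr (SimpleGraph.dist_eq_one_iff_adj.mpr hadj2.symm)
                · rw [Finset.mem_singleton] at ht; subst ht
                  exact mem_lvl.mpr (SimpleGraph.dist_eq_one_iff_adj.mpr hq)
            have hc3 : ({u1, u2, q} : Finset V).card = 3 := by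
              rw [Finset.card_insert_of_notMem, Finset.card_pair (fun h => hqu2 h.symm)]
              simp only [Finset.mem_insert, Finset.mem_singleton]
              push_neg
              exact ⟨hne, fun h => hqu1 h.symm⟩
            have hle3 := Finset.card_le_card hsub3
            have hdeg := degle (f u1)
            omega
          have := Finset.card_le_card_of_injOn f hmaps hinjf
          omega
    obtain ⟨_, kz, hkz1, hkzle, hkzne, hkz4⟩ := gen z
    have := grow kz hkz1 hkzle
    omega

lemma solve_levels {a b n : ℕ} (h1 : a + b = n) (h2 : a.choose 2 + b.choose 2 = n)
    (ha2 : 2 ≤ a) (ha4 : a ≤ 4) (hb3 : b ≤ 3) (hforb : ¬(4 ≤ a ∧ 3 ≤ b)) :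
    (a = 3 ∧ b = 0) ∨ (a = 3 ∧ b = 3) := by
  interval_cases a <;> interval_cases b <;> simp [Nat.choose] at h2 ⊢ <;> omega

lemma endgame (hc : G.Connected)
    (hN3 : ∀ S : Finset V, S.card = 3 → IsResolvingSet G ↑S)
    (hN2 : ∀ S : Finset V, S.card = 2 → ¬ IsResolvingSet G ↑S)
    (hmax2 : ∀ u v : V, G.dist u v ≤ 2) (hn2 : 2 ≤ Fintype.card V) :
    Fintype.card V = 4 ∧ ∀ u v : V, u ≠ v → G.Adj u v := by
  classical
  obtain ⟨hcard2, hinj2⟩ := Nbij hN3 hN2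
  have hIcc : (Icc 1 2 : Finset ℕ) = {1, 2} := by decide
  have hsums : ∀ v : V, (lvl G v 1).card + (lvl G v 2).card = Fintype.card V - 1 ∧
      ((lvl G v 1).card).choose 2 + ((lvl G v 2).card).choose 2 = Fintype.card V - 1 := by
    intro v
    have hsm := sum_m hc hmax2 v
    have hsc := sum_choose hc hN3 hN2 hmax2 v
    rw [hIcc, Finset.sum_pair (by omega : (1:ℕ) ≠ 2)] at hsm hsc
    exact ⟨hsm, hsc⟩
  have hsol : ∀ v : V, ((lvl G v 1).card = 3 ∧ (lvl G v 2).card = 0) ∨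
      ((lvl G v 1).card = 3 ∧ (lvl G v 2).card = 3) := by
    intro v
    obtain ⟨hsm, hsc⟩ := hsums v
    have h21 : 2 ≤ (lvl G v 1).card := two_neighbors hc hcard2 hn2 v
    obtain ⟨w, hw⟩ := exists_nbr hc hn2 v
    have hvw1 : G.dist v w = 1 := SimpleGraph.dist_eq_one_iff_adj.mpr hw
    have hwmem : w ∈ lvl G v 1 := mem_lvl.mpr hvw1
    have hmap2 : ∀ u ∈ lvl G v 2, G.dist w u ∈ ({1, 2} : Finset ℕ) := by
      intro u hu
      have hdu : G.dist v u = 2 := mem_lvl.mp hu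
      have hle := hmax2 w u
      have hne : u ≠ w := by intro h; rw [h] at hdu; omega
      have hpos : 0 < G.dist w u := hc.pos_dist_of_ne (fun h => hne h.symm)
      simp only [Finset.mem_insert, Finset.mem_singleton]
      omega
    have hmap1 : ∀ u ∈ (lvl G v 1).erase w, G.dist w u ∈ ({1, 2} : Finset ℕ) := by
      intro u hu
      obtain ⟨hune, hul⟩ := Finset.mem_erase.mp hu
      have hle := hmax2 w u
      have hpos : 0 < G.dist w u := hc.pos_dist_of_ne (fun h => hune h.symm)
      simp only [Finset.mem_insert, Finset.mem_singleton]
      omega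
    have hb2 : (lvl G v 2).card ≤ 3 := by
      by_contra hh
      push_neg at hh
      obtain ⟨u1, hu1, v1, hv1, u2, hu2, v2, hv2, hne1, hne2, hd1, hd2, hx1, hx2⟩ :=
        pigeon2 hmap2 (le_trans (show ({1, 2} : Finset ℕ).card + 2 ≤ 4 by
          have := card2 1 2; omega) hh)
      exact no_two_pairs hcard2 hinj2 hw.ne hne1 hne2 hx1 hx2
        ((mem_lvl.mp hu1).trans (mem_lvl.mp hv1).symm) hd1
        ((mem_lvl.mp hu2).trans (mem_lvl.mp hv2).symm) hd2
    have hb1 : (lvl G v 1).card ≤ 4 := by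
      by_contra hh
      push_neg at hh
      have hec : 4 ≤ ((lvl G v 1).erase w).card := by
        have := Finset.card_erase_of_mem hwmem; omega
      obtain ⟨u1, hu1, v1, hv1, u2, hu2, v2, hv2, hne1, hne2, hd1, hd2, hx1, hx2⟩ :=
        pigeon2 hmap1 (le_trans (show ({1, 2} : Finset ℕ).card + 2 ≤ 4 by
          have := card2 1 2; omega) hec)
      exact no_two_pairs hcard2 hinj2 hw.ne hne1 hne2 hx1 hx2
        ((mem_lvl.mp (Finset.mem_of_mem_erase hu1)).trans
          (mem_lvl.mp (Finset.mem_of_mem_erase hv1)).symm) hd1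
        ((mem_lvl.mp (Finset.mem_of_mem_erase hu2)).trans
          (mem_lvl.mp (Finset.mem_of_mem_erase hv2)).symm) hd2
    have hb12 : ¬(4 ≤ (lvl G v 1).card ∧ 3 ≤ (lvl G v 2).card) := by
      rintro ⟨h4, h3⟩
      have hec : 3 ≤ ((lvl G v 1).erase w).card := by
        have := Finset.card_erase_of_mem hwmem; omega
      obtain ⟨u1, hu1, v1, hv1, hne1, hd1⟩ :=
        pigeon1 hmap1 (lt_of_le_of_lt (card2 1 2) (by omega))
      obtain ⟨u2, hu2, v2, hv2, hne2, hd2⟩ :=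
        pigeon1 hmap2 (lt_of_le_of_lt (card2 1 2) (by omega))
      exact no_pairs_two_levels hcard2 hinj2 hw.ne (show (1:ℕ) ≠ 2 by omega) hne1 hne2
        (mem_lvl.mp (Finset.mem_of_mem_erase hu1)) (mem_lvl.mp (Finset.mem_of_mem_erase hv1))
        (mem_lvl.mp hu2) (mem_lvl.mp hv2) hd1 hd2
    exact solve_levels hsm hsc h21 hb1 hb2 hb12
  by_cases hex : ∃ v : V, (lvl G v 2).card = 0
  · obtain ⟨v0, hv0⟩ := hex
    have h30 : (lvl G v0 1).card = 3 := by
      rcases hsol v0 with ⟨h, _⟩ | ⟨h, h2⟩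
      · exact h
      · rw [hv0] at h2; omega
    have hn4 : Fintype.card V = 4 := by
      have := (hsums v0).1
      rw [h30, hv0] at this
      omega
    refine ⟨hn4, ?_⟩
    have hm0 : ∀ t : V, (lvl G t 2).card = 0 := by
      intro t
      rcases hsol t with ⟨_, h⟩ | ⟨h1, h2⟩
      · exact h
      · exfalso
        have := (hsums t).1
        rw [h1, h2, hn4] at this
        omega
    intro u v huv
    have hd : G.dist u v ≤ 2 := hmax2 u v
    have hpos : 0 < G.dist u v := hc.pos_dist_of_ne huv
    have hne2' : G.dist u v ≠ 2 := by
      intro h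
      have hmem : v ∈ lvl G u 2 := mem_lvl.mpr h
      rw [Finset.card_eq_zero.mp (hm0 u)] at hmem
      exact absurd hmem (Finset.notMem_empty v)
    exact SimpleGraph.dist_eq_one_iff_adj.mp (by omega)
  · push_neg at hex
    exfalso
    have hall : ∀ v : V, (lvl G v 1).card = 3 ∧ (lvl G v 2).card = 3 := by
      intro v
      rcases hsol v with ⟨_, h⟩ | h
      · exact absurd h (hex v)
      · exact h
    obtain ⟨v0⟩ : Nonempty V := Fintype.card_pos_iff.mp (by omega)
    have hn7 : Fintype.card V = 7 := by
      have := (hsums v0).1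
      rw [(hall v0).1, (hall v0).2] at this
      omega
    letI : DecidableRel G.Adj := fun a b => Classical.dec _
    have hdeg : ∀ v : V, G.degree v = 3 := by
      intro v
      have hlv : lvl G v 1 = G.neighborFinset v := by
        ext u
        rw [mem_lvl, SimpleGraph.mem_neighborFinset]
        exact SimpleGraph.dist_eq_one_iff_adj
      calc G.degree v = (G.neighborFinset v).card := rfl
        _ = (lvl G v 1).card := by rw [hlv]
        _ = 3 := (hall v).1
    have hsum := SimpleGraph.sum_degrees_eq_twice_card_edges G
    rw [Finset.sum_congr rfl (fun v _ => hdeg v), Finset.sum_const, smul_eq_mul,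
      Finset.card_univ, hn7] at hsum
    omega

end K4

/-- a randomly 3-dimensional graph is isomorphic to the complete graph `K₄`. -/
theorem stmt5 {V : Type*} [Fintype V] [DecidableEq V] (G : SimpleGraph V)
    (hconn : G.Connected) (hdim : metricDim G = 3) (hres : resolvingNumber G = 3) :
    Nonempty (G ≃g (⊤ : SimpleGraph (Fin 4))) := by
  classical
  by_cases hsmall : Fintype.card V ≤ 1
  · exfalso
    have h0 : (0 : ℕ) ∈ {k | ∃ S : Finset V, S.card = k ∧ IsResolvingSet G ↑S} := by
      refine ⟨∅, Finset.card_empty, ?_⟩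
      intro a b hab
      exact absurd (Fintype.card_le_one_iff.mp hsmall a b) hab
    have hd0 : metricDim G = 0 := Nat.sInf_eq_zero.mpr (Or.inl h0)
    omega
  push_neg at hsmall
  have hn2 : 2 ≤ Fintype.card V := hsmall
  have hne : {k | ∀ S : Finset V, S.card = k → IsResolvingSet G ↑S}.Nonempty := by
    refine ⟨Fintype.card V + 1, ?_⟩
    intro S hS
    exfalso
    have := Finset.card_le_univ S
    omega
  have hN3' : resolvingNumber G ∈ {k | ∀ S : Finset V, S.card = k → IsResolvingSet G ↑S} :=
    Nat.sInf_mem hne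
  rw [hres] at hN3'
  have hN3 : ∀ S : Finset V, S.card = 3 → IsResolvingSet G ↑S := hN3'
  have hN2 : ∀ S : Finset V, S.card = 2 → ¬ IsResolvingSet G ↑S := by
    intro S hS hres2
    have h2 : (2 : ℕ) ∈ {k | ∃ S : Finset V, S.card = k ∧ IsResolvingSet G ↑S} :=
      ⟨S, hS, hres2⟩
    have hle : metricDim G ≤ 2 := Nat.sInf_le h2
    omega
  have hVne : Nonempty V := Fintype.card_pos_iff.mp (by omega)
  obtain ⟨v0⟩ := hVne
  obtain ⟨p0, _, hp0⟩ := Finset.exists_max_image (univ : Finset (V × V))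
    (fun p => G.dist p.1 p.2) ⟨(v0, v0), Finset.mem_univ _⟩
  set D := G.dist p0.1 p0.2 with hD
  have hmax : ∀ u v : V, G.dist u v ≤ D := fun u v => hp0 (u, v) (Finset.mem_univ _)
  rcases Nat.lt_or_ge D 3 with hD2 | hD3
  · have hmax2 : ∀ u v : V, G.dist u v ≤ 2 := fun u v => le_trans (hmax u v) (by omega)
    obtain ⟨hn4, hadj⟩ := K4.endgame hconn hN3 hN2 hmax2 hn2
    have e : V ≃ Fin 4 := Fintype.equivFinOfCardEq hn4
    refine ⟨⟨e, ?_⟩⟩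
    intro a b
    simp only [SimpleGraph.top_adj]
    constructor
    · intro h
      exact hadj a b (fun hh => h (by rw [hh]))
    · intro h hh
      exact h.ne (e.injective hh)
  · exfalso
    have hxz : G.dist p0.1 p0.2 = D := rfl
    have hxzne : p0.1 ≠ p0.2 := by
      rintro h
      rw [h, SimpleGraph.dist_self] at hxz
      omega
    obtain ⟨hcard2, hinj2⟩ := K4.Nbij hN3 hN2
    have hd2 : (K4.lvl G p0.2 1).card = 2 ∨ (K4.lvl G p0.1 1).card = 2 := by
      by_contra hh
      push_neg at hh
      have hz3 : 3 ≤ (K4.lvl G p0.2 1).card := by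
        have := K4.two_neighbors hconn hcard2 hn2 p0.2; omega
      have hx3 : 3 ≤ (K4.lvl G p0.1 1).card := by
        have := K4.two_neighbors hconn hcard2 hn2 p0.1; omega
      have hmapx : ∀ u ∈ K4.lvl G p0.1 1, G.dist p0.2 u ∈ ({D - 1, D} : Finset ℕ) := by
        intro u hu
        have hdu : G.dist p0.1 u = 1 := K4.mem_lvl.mp hu
        have htri : G.dist p0.1 p0.2 ≤ G.dist p0.1 u + G.dist u p0.2 := hconn.dist_triangle
        have hcm : G.dist u p0.2 = G.dist p0.2 u := SimpleGraph.dist_comm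
        have hle := hmax p0.2 u
        simp only [Finset.mem_insert, Finset.mem_singleton]
        omega
      have hmapz : ∀ u ∈ K4.lvl G p0.2 1, G.dist p0.1 u ∈ ({D - 1, D} : Finset ℕ) := by
        intro u hu
        have hdu : G.dist p0.2 u = 1 := K4.mem_lvl.mp hu
        have htri : G.dist p0.1 p0.2 ≤ G.dist p0.1 u + G.dist u p0.2 := hconn.dist_triangle
        have hcm : G.dist u p0.2 = G.dist p0.2 u := SimpleGraph.dist_comm
        have hle := hmax p0.1 u
        simp only [Finset.mem_insert, Finset.mem_singleton]
        omega
      obtain ⟨u1, hu1, w1, hw1, hne1, hd1⟩ :=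
        K4.pigeon1 hmapx (lt_of_le_of_lt (K4.card2 (D - 1) D) (by omega))
      obtain ⟨u2, hu2, w2, hw2, hne2, hd2'⟩ :=
        K4.pigeon1 hmapz (lt_of_le_of_lt (K4.card2 (D - 1) D) (by omega))
      have hcross : ∀ a ∈ K4.lvl G p0.1 1, ∀ b ∈ K4.lvl G p0.2 1, a ≠ b := by
        intro a ha b hb hab
        subst hab
        have h1 : G.dist p0.1 a = 1 := K4.mem_lvl.mp ha
        have h2 : G.dist p0.2 a = 1 := K4.mem_lvl.mp hb
        have htri : G.dist p0.1 p0.2 ≤ G.dist p0.1 a + G.dist a p0.2 := hconn.dist_triangle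
        have hcm : G.dist a p0.2 = G.dist p0.2 a := SimpleGraph.dist_comm
        omega
      exact K4.no_two_pairs hcard2 hinj2 hxzne hne1 hne2
        (hcross u1 hu1 u2 hu2) (hcross u1 hu1 w2 hw2)
        ((K4.mem_lvl.mp hu1).trans (K4.mem_lvl.mp hw1).symm) hd1
        hd2' ((K4.mem_lvl.mp hu2).trans (K4.mem_lvl.mp hw2).symm)
    rcases hd2 with h | h
    · exact K4.main3 hconn hN3 hN2 hmax hxz hD3 h
    · exact K4.main3 hconn hN3 hN2 hmax
        (show G.dist p0.2 p0.1 = D by rw [SimpleGraph.dist_comm]) hD3 h
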